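/- arXiv:math/0503640 — 3 statements merged into one kernel-verified Lean document; each statement's English description precedes it below -/
import Mathlib

section
/- Cartan's angular invariant satisfies the cocycle condition: for any four pairwise distinct null points x₁,x₂,x₃,x₄, -𝔸(x₂,x₃,x₄) + 𝔸(x₁,x₃,x₄) - 𝔸(x₁,x₂,x₄) + 𝔸(x₁,x₂,x₃) = 0 (mod 2π). -/
open Complex

/-- The Hermitian form `⟨u,w⟩ = u₁·conj(w₃) + u₂·conj(w₂) + u₃·conj(w₁)` on `ℂ³`. -/
noncomputable def herm (z w : Fin 3 → ℂ) : ℂ :=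
  z 0 * (starRingEnd ℂ) (w 2) + z 1 * (starRingEnd ℂ) (w 1) + z 2 * (starRingEnd ℂ) (w 0)

/-- Cartan's angular invariant of a triple of lifted boundary points. -/
noncomputable def cartan (p q r : Fin 3 → ℂ) : ℝ :=
  Complex.arg (-(herm p q * herm q r * herm r p))

lemma herm_conj (z w : Fin 3 → ℂ) : herm w z = (starRingEnd ℂ) (herm z w) := by
  simp only [herm, map_add, map_mul, Complex.conj_conj]
  ring

/-- The cocycle condition for Cartan's angular invariant: for four pairwise
distinct null points `x₁, x₂, x₃, x₄` (lifted to null vectors with pairwise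
nonvanishing Hermitian products),
`-𝔸(x₂,x₃,x₄) + 𝔸(x₁,x₃,x₄) - 𝔸(x₁,x₂,x₄) + 𝔸(x₁,x₂,x₃) = 0 (mod 2π)`. -/
theorem cartan_cocycle (x : Fin 4 → (Fin 3 → ℂ))
    (hnull : ∀ i, herm (x i) (x i) = 0)
    (hne : ∀ i, x i ≠ 0)
    (hdist : ∀ i j, i ≠ j → herm (x i) (x j) ≠ 0) :
    ((- cartan (x 1) (x 2) (x 3) + cartan (x 0) (x 2) (x 3)
      - cartan (x 0) (x 1) (x 3) + cartan (x 0) (x 1) (x 2) : ℝ) : Real.Angle) = 0 := by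
  set A : Fin 4 → Fin 4 → Fin 4 → ℂ :=
    fun i j k => -(herm (x i) (x j) * herm (x j) (x k) * herm (x k) (x i)) with hA
  have hAne : ∀ i j k : Fin 4, i ≠ j → j ≠ k → k ≠ i → A i j k ≠ 0 := by
    intro i j k hij hjk hki
    simp only [hA, neg_ne_zero]
    exact mul_ne_zero (mul_ne_zero (hdist i j hij) (hdist j k hjk)) (hdist k i hki)
  have h234 : A 1 2 3 ≠ 0 := hAne 1 2 3 (by decide) (by decide) (by decide)
  have h134 : A 0 2 3 ≠ 0 := hAne 0 2 3 (by decide) (by decide) (by decide)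
  have h124 : A 0 1 3 ≠ 0 := hAne 0 1 3 (by decide) (by decide) (by decide)
  have h123 : A 0 1 2 ≠ 0 := hAne 0 1 2 (by decide) (by decide) (by decide)
  have hc234 : (starRingEnd ℂ) (A 1 2 3) ≠ 0 := by
    simpa using h234
  have hc124 : (starRingEnd ℂ) (A 0 1 3) ≠ 0 := by
    simpa using h124
  have hcart : ∀ i j k : Fin 4, cartan (x i) (x j) (x k) = Complex.arg (A i j k) := by
    intro i j k; rfl
  -- the key product is a nonnegative real number
  have key : (starRingEnd ℂ) (A 1 2 3) * A 0 2 3 * (starRingEnd ℂ) (A 0 1 3) * A 0 1 2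
      = ((Complex.normSq (herm (x 0) (x 1)) * Complex.normSq (herm (x 0) (x 2)) *
          Complex.normSq (herm (x 0) (x 3)) * Complex.normSq (herm (x 1) (x 2)) *
          Complex.normSq (herm (x 1) (x 3)) * Complex.normSq (herm (x 2) (x 3)) : ℝ) : ℂ) := by
    simp only [hA]
    rw [herm_conj (x 1) (x 3), herm_conj (x 0) (x 3), herm_conj (x 0) (x 2)]
    simp only [map_neg, map_mul, Complex.conj_conj, Complex.ofReal_mul,
      ← Complex.mul_conj]
    ring
  have hnonneg : (0:ℝ) ≤ Complex.normSq (herm (x 0) (x 1)) * Complex.normSq (herm (x 0) (x 2)) *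
          Complex.normSq (herm (x 0) (x 3)) * Complex.normSq (herm (x 1) (x 2)) *
          Complex.normSq (herm (x 1) (x 3)) * Complex.normSq (herm (x 2) (x 3)) := by
    apply_rules [mul_nonneg, Complex.normSq_nonneg]
  simp only [hcart]
  simp only [Real.Angle.coe_add, Real.Angle.coe_sub, Real.Angle.coe_neg]
  rw [ ← Complex.arg_conj_coe_angle (A 1 2 3),
    sub_eq_add_neg, ← Complex.arg_conj_coe_angle (A 0 1 3),
    ← Complex.arg_mul_coe_angle hc234 h134,
    ← Complex.arg_mul_coe_angle (mul_ne_zero hc234 h134) hc124,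
    ← Complex.arg_mul_coe_angle (mul_ne_zero (mul_ne_zero hc234 h134) hc124) h123,
    key, Complex.arg_ofReal_of_nonneg hnonneg, Real.Angle.coe_zero]
end

section
/- For the configuration p₁ = ∞, p₂ = 0, q₁ = (1,t), q₂ = (z,s|z|²), tan 𝔸(p₁,q₁,q₂) = (|z|²·s - t + 2·Im z)/|z-1|². -/
open Complex

/-- The lift of a Heisenberg point `(z,t)` to `ℂ³`. -/
noncomputable def heisLift (z : ℂ) (t : ℝ) : Fin 3 → ℂ :=
  ![(-(‖z‖ : ℂ) ^ 2 + t * Complex.I) / 2, z, 1]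

/-- The lift of the point `∞`. -/
noncomputable def inftyLift : Fin 3 → ℂ := ![1, 0, 0]

/-- For `p₁ = ∞`, `q₁ = (1,t)`, `q₂ = (z,s|z|²)`,
`tan 𝔸(p₁,q₁,q₂) = (|z|²·s - t + 2·Im z)/|z-1|²`. -/
theorem tan_cartan_formula (z : ℂ) (t s : ℝ) (hz : z ≠ 1) :
    Real.tan (cartan inftyLift (heisLift 1 t) (heisLift z (s * (‖z‖) ^ 2))) =
      ((‖z‖) ^ 2 * s - t + 2 * z.im) / (‖z - 1‖) ^ 2 := by
  have habs : ∀ w : ℂ, (‖w‖)^2 = w.re^2 + w.im^2 := by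
    intro w; rw [Complex.sq_norm, Complex.normSq_apply]; ring
  have key : -(herm inftyLift (heisLift 1 t) * herm (heisLift 1 t) (heisLift z (s * (‖z‖) ^ 2)) * herm (heisLift z (s * (‖z‖) ^ 2)) inftyLift)
      = Complex.mk ((‖z - 1‖)^2 / 2) (((‖z‖) ^ 2 * s - t + 2 * z.im) / 2) := by
    apply Complex.ext <;>
    · simp [herm, heisLift, inftyLift, Complex.ext_iff, Complex.div_re, Complex.div_im,
        Complex.normSq_apply, ← Complex.ofReal_pow, Complex.ofReal_re, Complex.ofReal_im, habs, Fin.isValue, Matrix.cons_val_zero, Matrix.cons_val_one,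
        Matrix.head_cons]
      ring
  rw [cartan, key, Complex.tan_arg]
  have h0 : (‖z - 1‖)^2 ≠ 0 := by
    simpa [sub_eq_zero] using hz
  field_simp
end

section
/- For the special tetrahedron with vertices p₁ = (0, 2+√3), p₂ = (0, -(2+√3)), q₁ = (ω, 0), q₂ = (1, 0) in the Heisenberg group, where ω = e^{-iπ/3}, Cartan's invariants satisfy 𝔸(q₁,q₂,p₂) = π/3 and 𝔸(p₁,q₂,p₂) = -π/3. -/
open Complex

/-- For the special tetrahedron with vertices `p₁ = (0, 2+√3)`, `p₂ = (0, -(2+√3))`,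
`q₁ = (ω, 0)`, `q₂ = (1, 0)` where `ω = e^{-iπ/3}`, one has
`𝔸(q₁,q₂,p₂) = π/3` and `𝔸(p₁,q₂,p₂) = -π/3`. -/
theorem cartan_standard_special_tetrahedron :
    cartan (heisLift (Complex.exp (-(Real.pi / 3 : ℝ) * Complex.I)) 0) (heisLift 1 0)
        (heisLift 0 (-(2 + Real.sqrt 3))) = Real.pi / 3 ∧
    cartan (heisLift 0 (2 + Real.sqrt 3)) (heisLift 1 0)
        (heisLift 0 (-(2 + Real.sqrt 3))) = -(Real.pi / 3) := by
  have hs3' : ((Real.sqrt 3 : ℝ) : ℂ) ^ 2 = 3 := by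
    rw [← Complex.ofReal_pow, Real.sq_sqrt (by norm_num : (3:ℝ) ≥ 0)]; norm_num
  have harg : (-(Real.pi / 3 : ℝ) * Complex.I : ℂ) = ((-(Real.pi/3) : ℝ) : ℂ) * Complex.I := by
    push_cast; ring
  have hexp : Complex.exp (-(Real.pi / 3 : ℝ) * Complex.I)
      = 1/2 - ((Real.sqrt 3 : ℝ)/2 : ℂ) * Complex.I := by
    rw [harg, Complex.exp_mul_I, ← Complex.ofReal_cos, ← Complex.ofReal_sin,
      Real.cos_neg, Real.sin_neg, Real.cos_pi_div_three, Real.sin_pi_div_three]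
    push_cast; ring
  have habs : ‖Complex.exp (-(Real.pi / 3 : ℝ) * Complex.I)‖ = 1 := by
    rw [harg]; exact Complex.norm_exp_ofReal_mul_I _
  have hcos : ((Real.cos (Real.pi/3) : ℝ) : ℂ) = 1/2 := by
    rw [Real.cos_pi_div_three]; norm_num
  have hsin : ((Real.sin (Real.pi/3) : ℝ) : ℂ) = ((Real.sqrt 3 : ℝ) : ℂ)/2 := by
    rw [Real.sin_pi_div_three]; push_cast; ring
  have hcos' : ((Real.cos (-(Real.pi/3)) : ℝ) : ℂ) = 1/2 := by
    rw [Real.cos_neg]; exact hcos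
  have hsin' : ((Real.sin (-(Real.pi/3)) : ℝ) : ℂ) = -(((Real.sqrt 3 : ℝ) : ℂ)/2) := by
    rw [Real.sin_neg, Complex.ofReal_neg, hsin]
  have hmem : Real.pi / 3 ∈ Set.Ioc (-Real.pi) Real.pi :=
    ⟨by linarith [Real.pi_pos], by linarith [Real.pi_pos]⟩
  have hmem' : -(Real.pi / 3) ∈ Set.Ioc (-Real.pi) Real.pi :=
    ⟨by linarith [Real.pi_pos], by linarith [Real.pi_pos]⟩
  constructor
  · have key : -(herm (heisLift (Complex.exp (-(Real.pi / 3 : ℝ) * Complex.I)) 0) (heisLift 1 0)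
        * herm (heisLift 1 0) (heisLift 0 (-(2 + Real.sqrt 3)))
        * herm (heisLift 0 (-(2 + Real.sqrt 3))) (heisLift (Complex.exp (-(Real.pi / 3 : ℝ) * Complex.I)) 0))
        = ((2 + Real.sqrt 3 : ℝ) : ℂ)
          * (((Real.cos (Real.pi/3) : ℝ) : ℂ) + ((Real.sin (Real.pi/3) : ℝ) : ℂ) * Complex.I) := by
      simp only [herm, heisLift, Matrix.cons_val_zero, Matrix.cons_val_one, Matrix.head_cons,
        Matrix.cons_val_two, Matrix.tail_cons, habs, map_one, map_zero, norm_zero, norm_one,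
        Complex.ofReal_zero, Complex.ofReal_one, zero_mul, one_pow]
      rw [hexp, hcos, hsin]
      simp only [map_div₀, map_neg, map_add, map_mul, map_sub, map_pow, map_one, map_ofNat,
        Complex.conj_I, Complex.conj_ofReal, map_zero, Complex.ofReal_neg, Complex.ofReal_add,
        Complex.ofReal_ofNat]
      linear_combination
        (-Complex.I^2/8 - Complex.I^3/2 - ((Real.sqrt 3:ℝ):ℂ)*Complex.I^3/8
          - Complex.I/2) * hs3'
        + (-(7:ℂ)/8 - ((Real.sqrt 3:ℝ):ℂ)/2 - 7*((Real.sqrt 3:ℝ):ℂ)*Complex.I/8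
          - 3*Complex.I/2) * Complex.I_sq
    rw [show cartan (heisLift (Complex.exp (-(Real.pi / 3 : ℝ) * Complex.I)) 0) (heisLift 1 0)
        (heisLift 0 (-(2 + Real.sqrt 3))) = _ from congrArg Complex.arg key,
      Complex.ofReal_cos, Complex.ofReal_sin,
      Complex.arg_real_mul _ (by positivity), Complex.arg_cos_add_sin_mul_I hmem]
  · have key : -(herm (heisLift 0 (2 + Real.sqrt 3)) (heisLift 1 0)
        * herm (heisLift 1 0) (heisLift 0 (-(2 + Real.sqrt 3)))
        * herm (heisLift 0 (-(2 + Real.sqrt 3))) (heisLift 0 (2 + Real.sqrt 3)))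
        = ((7 + 4 * Real.sqrt 3 : ℝ) : ℂ)
          * (((Real.cos (-(Real.pi/3)) : ℝ) : ℂ) + ((Real.sin (-(Real.pi/3)) : ℝ) : ℂ) * Complex.I) := by
      simp only [herm, heisLift, Matrix.cons_val_zero, Matrix.cons_val_one, Matrix.head_cons,
        Matrix.cons_val_two, Matrix.tail_cons, map_one, map_zero, norm_zero, norm_one,
        Complex.ofReal_zero, Complex.ofReal_one, zero_mul, one_pow]
      rw [hcos', hsin']
      simp only [map_div₀, map_neg, map_add, map_mul, map_sub, map_pow, map_one, map_ofNat,
        Complex.conj_I, Complex.conj_ofReal, map_zero, Complex.ofReal_neg, Complex.ofReal_add,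
        Complex.ofReal_ofNat]
      push_cast
      linear_combination
        (-Complex.I^2/2 + 3*Complex.I^3/2 + ((Real.sqrt 3:ℝ):ℂ)*Complex.I^3/4
          + 2*Complex.I) * hs3'
        + (-(7:ℂ)/2 - 2*((Real.sqrt 3:ℝ):ℂ) + 13*Complex.I/2
          + 15*((Real.sqrt 3:ℝ):ℂ)*Complex.I/4) * Complex.I_sq
    rw [show cartan (heisLift 0 (2 + Real.sqrt 3)) (heisLift 1 0)
        (heisLift 0 (-(2 + Real.sqrt 3))) = _ from congrArg Complex.arg key,
      Complex.ofReal_cos, Complex.ofReal_sin,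
      Complex.arg_real_mul _ (by positivity), Complex.arg_cos_add_sin_mul_I hmem']
end
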